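/- For every k ≥ 5 and every surjective colouring Δ : ℕ^(2) ↠ [k], the set F_Δ meets {5, 6, 7}: there exists m ∈ {5, 6, 7} and an infinite X ⊆ ℕ that is exactly m-coloured. -/

import Mathlib

/-- The colour of the unordered edge `{x, y}` (only values on distinct pairs matter). -/
def edgeCol (Δ : ℕ → ℕ → ℕ) (x y : ℕ) : ℕ := Δ (min x y) (max x y)

/-- `colourSet Δ X` is the set of colours attained by `Δ` on edges with both endpoints in `X`. -/
def colourSet (Δ : ℕ → ℕ → ℕ) (X : Set ℕ) : Set ℕ :=
  {c | ∃ x ∈ X, ∃ y ∈ X, x ≠ y ∧ edgeCol Δ x y = c}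

/-- `Δ` is a surjective colouring `ℕ^(2) ↠ [k]` of the edges of the complete
graph on `ℕ` with colour set `[k] = {1, …, k}`. -/
def IsColouring (Δ : ℕ → ℕ → ℕ) (k : ℕ) : Prop :=
  (∀ x y : ℕ, x ≠ y → edgeCol Δ x y ∈ Finset.Icc 1 k) ∧
  (∀ c ∈ Finset.Icc 1 k, ∃ x y : ℕ, x ≠ y ∧ edgeCol Δ x y = c)

/-- `F_Δ`: the set of `m ∈ [k]` for which some infinite `X ⊆ ℕ` is exactly `m`-coloured. -/
def FSet (Δ : ℕ → ℕ → ℕ) (k : ℕ) : Set ℕ :=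
  {m | m ∈ Finset.Icc 1 k ∧ ∃ X : Set ℕ, X.Infinite ∧ (colourSet Δ X).ncard = m}

lemma edgeCol_comm (Δ : ℕ → ℕ → ℕ) (x y : ℕ) : edgeCol Δ x y = edgeCol Δ y x := by
  unfold edgeCol; rw [min_comm, max_comm]

lemma colourSet_mono (Δ : ℕ → ℕ → ℕ) {X Y : Set ℕ} (h : X ⊆ Y) :
    colourSet Δ X ⊆ colourSet Δ Y := by
  rintro c ⟨x, hx, y, hy, hxy, rfl⟩
  exact ⟨x, h hx, y, h hy, hxy, rfl⟩

lemma mem_colourSet (Δ : ℕ → ℕ → ℕ) {X : Set ℕ} {x y : ℕ} (hx : x ∈ X) (hy : y ∈ X)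
    (hxy : x ≠ y) : edgeCol Δ x y ∈ colourSet Δ X := ⟨x, hx, y, hy, hxy, rfl⟩

lemma colourSet_insert (Δ : ℕ → ℕ → ℕ) {X : Set ℕ} {v : ℕ} (hv : v ∉ X) :
    colourSet Δ (insert v X) = colourSet Δ X ∪ (edgeCol Δ v) '' X := by
  ext c
  constructor
  · rintro ⟨x, hx, y, hy, hxy, rfl⟩
    rcases hx with rfl | hx
    · rcases hy with rfl | hy
      · exact absurd rfl hxy
      · exact Or.inr ⟨y, hy, rfl⟩
    · rcases hy with rfl | hy
      · exact Or.inr ⟨x, hx, (edgeCol_comm Δ x y).symm⟩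
      · exact Or.inl ⟨x, hx, y, hy, hxy, rfl⟩
  · rintro (⟨x, hx, y, hy, hxy, rfl⟩ | ⟨y, hy, rfl⟩)
    · exact ⟨x, Or.inr hx, y, Or.inr hy, hxy, rfl⟩
    · exact ⟨v, Or.inl rfl, y, Or.inr hy, fun h => hv (h ▸ hy), rfl⟩

lemma colourSet_subset_Icc {Δ : ℕ → ℕ → ℕ} {k : ℕ}
    (h1 : ∀ x y : ℕ, x ≠ y → edgeCol Δ x y ∈ Finset.Icc 1 k) (X : Set ℕ) :
    colourSet Δ X ⊆ ↑(Finset.Icc 1 k) := by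
  rintro c ⟨x, hx, y, hy, hxy, rfl⟩
  exact_mod_cast h1 x y hxy

lemma colourSet_finite {Δ : ℕ → ℕ → ℕ} {k : ℕ}
    (h1 : ∀ x y : ℕ, x ≠ y → edgeCol Δ x y ∈ Finset.Icc 1 k) (X : Set ℕ) :
    (colourSet Δ X).Finite :=
  Set.Finite.subset (Finset.Icc 1 k).finite_toSet (colourSet_subset_Icc h1 X)

lemma exists_infinite_fiber' {S : Set ℕ} (hS : S.Infinite) (f : ℕ → ℕ) {k : ℕ}
    (hf : ∀ x ∈ S, f x ∈ Finset.Icc 1 k) :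
    ∃ c, {x ∈ S | f x = c}.Infinite := by
  by_contra h
  push_neg at h
  have : S ⊆ ⋃ c ∈ Finset.Icc 1 k, {x ∈ S | f x = c} := by
    intro x hx
    exact Set.mem_biUnion (hf x hx) ⟨hx, rfl⟩
  exact hS ((Set.Finite.biUnion (Finset.Icc 1 k).finite_toSet (fun c _ => h c)).subset this)
lemma exists_mono_subset (Δ : ℕ → ℕ → ℕ) (k : ℕ)
    (h1 : ∀ x y : ℕ, x ≠ y → edgeCol Δ x y ∈ Finset.Icc 1 k)
    {S : Set ℕ} (hS : S.Infinite) :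
    ∃ (M : Set ℕ) (α : ℕ), M ⊆ S ∧ M.Infinite ∧
      ∀ x ∈ M, ∀ y ∈ M, x ≠ y → edgeCol Δ x y = α := by
  have step : ∀ T : Set ℕ, T.Infinite → ∃ (a c : ℕ) (T' : Set ℕ),
      a ∈ T ∧ T'.Infinite ∧ T' ⊆ T ∧ a ∉ T' ∧ ∀ t ∈ T', edgeCol Δ a t = c := by
    intro T hT
    obtain ⟨a, ha⟩ := hT.nonempty
    have h2 : (T \ {a}).Infinite := hT.diff (Set.finite_singleton a)
    obtain ⟨c, hc⟩ := exists_infinite_fiber' h2 (edgeCol Δ a)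
      (fun x hx => h1 a x (fun h => hx.2 (Set.mem_singleton_iff.mpr h.symm)))
    refine ⟨a, c, {x ∈ T \ {a} | edgeCol Δ a x = c}, ha, hc, ?_, ?_, ?_⟩
    · exact fun x hx => hx.1.1
    · exact fun h => h.1.2 rfl
    · exact fun t ht => ht.2
  choose a c T' ha hinf hsub hna hcol using step
  -- iterate
  let f : ℕ → {T : Set ℕ // T.Infinite} := fun n =>
    Nat.rec ⟨S, hS⟩ (fun _ p => ⟨T' p.1 p.2, hinf p.1 p.2⟩) n
  have hfsucc : ∀ n, (f (n + 1)).1 = T' (f n).1 (f n).2 := fun n => rfl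
  set A : ℕ → ℕ := fun n => a (f n).1 (f n).2 with hA
  set C : ℕ → ℕ := fun n => c (f n).1 (f n).2 with hC
  have hmemA : ∀ n, A n ∈ (f n).1 := fun n => ha _ _
  have hchain : ∀ m n, m ≤ n → (f n).1 ⊆ (f m).1 := by
    intro m n h
    induction n with
    | zero => cases Nat.le_zero.mp h; exact subset_rfl
    | succ n ih =>
      rcases Nat.lt_or_ge m (n+1) with h' | h'
      · exact (hfsucc n ▸ hsub (f n).1 (f n).2).trans (ih (Nat.lt_succ_iff.mp h'))
      · cases Nat.le_antisymm h h'; exact subset_rfl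
  have hkey : ∀ m n, m < n → A n ∈ T' (f m).1 (f m).2 := by
    intro m n h
    exact (hfsucc m ▸ hchain (m+1) n h) (hmemA n)
  have hinjA : Function.Injective A := by
    intro m n hmn
    by_contra h
    rcases Nat.lt_or_ge m n with h' | h'
    · have := hkey m n h'
      rw [← hmn] at this
      exact hna (f m).1 (f m).2 this
    · have := hkey n m (lt_of_le_of_ne h' (Ne.symm h))
      rw [hmn] at this
      exact hna (f n).1 (f n).2 this
  have hcolA : ∀ m n, m < n → edgeCol Δ (A m) (A n) = C m := by
    intro m n h
    exact hcol (f m).1 (f m).2 _ (hkey m n h)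
  have hCmem : ∀ n, C n ∈ Finset.Icc 1 k := by
    intro n
    have h01 : A n ≠ A (n+1) := fun h => (Nat.succ_ne_self n).symm (hinjA h)
    rw [← hcolA n (n+1) (Nat.lt_succ_self n)]
    exact h1 _ _ h01
  obtain ⟨α, hα⟩ := exists_infinite_fiber' (Set.infinite_univ (α := ℕ)) C
    (fun n _ => hCmem n)
  refine ⟨A '' {n | C n = α}, α, ?_, ?_, ?_⟩
  · rintro x ⟨n, _, rfl⟩
    exact hchain 0 n (Nat.zero_le n) (hmemA n)
  · exact Set.Infinite.image (Set.injOn_of_injective hinjA)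
      (by simpa [Set.sep_univ] using hα)
  · rintro x ⟨m, hm, rfl⟩ y ⟨n, hn, rfl⟩ hxy
    have hmn : m ≠ n := fun h => hxy (h ▸ rfl)
    rcases Nat.lt_or_ge m n with h' | h'
    · rw [hcolA m n h']; exact hm
    · rw [edgeCol_comm, hcolA n m (lt_of_le_of_ne h' (Ne.symm hmn))]; exact hn


lemma core_lemma (Δ : ℕ → ℕ → ℕ)
    (dich : ∀ X : Set ℕ, X.Infinite →
      (colourSet Δ X).ncard ≠ 5 ∧ (colourSet Δ X).ncard ≠ 6 ∧ (colourSet Δ X).ncard ≠ 7)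
    (r : ℕ) (hr3 : 3 ≤ r)
    (M : Set ℕ) (hM : M.Infinite) (v α estar : ℕ) (hvM : v ∉ M)
    (u e : Fin r → ℕ) (huM : ∀ i, u i ∉ M) (huv : ∀ i, u i ≠ v)
    (hmono : ∀ x ∈ M, ∀ y ∈ M, x ≠ y → edgeCol Δ x y = α)
    (hvMc : ∀ x ∈ M, edgeCol Δ v x = estar)
    (hvu : ∀ i, edgeCol Δ v (u i) = e i)
    (A' : Set ℕ) (hA'fin : A'.Finite) (hestar : estar ∈ A') (hαA : α ∈ A')
    (hsub : colourSet Δ (M ∪ Set.range u) ⊆ A')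
    (heA : ∀ i, e i ∉ A') (heinj : Function.Injective e)
    (hcard : A'.ncard + r ≤ 8)
    (hae : 5 - r ≤ ({α, estar} : Set ℕ).ncard) : False := by
  obtain ⟨m1, hm1, m2, hm2, hm12⟩ := hM.nontrivial
  have hαmem : ∀ Y : Set ℕ, M ⊆ Y → α ∈ colourSet Δ Y := fun Y hY =>
    hmono m1 hm1 m2 hm2 hm12 ▸ mem_colourSet Δ (hY hm1) (hY hm2) hm12
  -- the sets Wᵢ := M ∪ u '' {j | j ≠ i}
  set W : Fin r → Set ℕ := fun i => M ∪ u '' {j | j ≠ i} with hWdef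
  have hWsub : ∀ i, W i ⊆ M ∪ Set.range u := by
    rintro i x (hx | ⟨j, _, rfl⟩)
    · exact Or.inl hx
    · exact Or.inr ⟨j, rfl⟩
  set B : Fin r → Set ℕ := fun i => colourSet Δ (W i) with hBdef
  set Ci : Fin r → Set ℕ := fun i => B i ∪ {estar} with hCidef
  have hBA : ∀ i, B i ⊆ A' := fun i => (colourSet_mono Δ (hWsub i)).trans hsub
  have hCiA : ∀ i, Ci i ⊆ A' := by
    rintro i x (hx | hx)
    · exact hBA i hx
    · exact hx ▸ hestar
  have hvW : ∀ i, v ∉ W i := by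
    rintro i (hv' | ⟨j, _, rfl⟩)
    · exact hvM hv'
    · exact huv j rfl
  have hvRange : v ∉ M ∪ Set.range u := by
    rintro (hv' | ⟨j, rfl⟩)
    · exact hvM hv'
    · exact huv j rfl
  -- image of edgeCol v over W i
  have himgM : edgeCol Δ v '' M = {estar} := by
    apply Set.Subset.antisymm
    · rintro c ⟨x, hx, rfl⟩; exact hvMc x hx
    · rintro c rfl; exact ⟨m1, hm1, hvMc m1 hm1⟩
  have himgW : ∀ i, edgeCol Δ v '' (W i) = {estar} ∪ e '' {j | j ≠ i} := by
    intro i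
    rw [hWdef, Set.image_union, himgM, Set.image_image]
    congr 1
    exact Set.image_congr (fun j _ => hvu j)
  -- colour set of Tᵢ := insert v (W i)
  have hcolT : ∀ i, colourSet Δ (insert v (W i)) = Ci i ∪ e '' {j | j ≠ i} := by
    intro i
    rw [colourSet_insert Δ (hvW i), himgW i]
    ext c
    simp only [hCidef, hBdef, Set.mem_union, Set.mem_singleton_iff]
    tauto
  -- cardinalities
  have hefin : ∀ s : Set (Fin r), (e '' s).Finite := fun s => (s.toFinite).image e
  have hCifin : ∀ i, (Ci i).Finite := fun i => hA'fin.subset (hCiA i)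
  have hA'r : A'.ncard ≤ 8 - r := by omega
  have hecard : ∀ i : Fin r, (e '' {j | j ≠ i}).ncard = r - 1 := by
    intro i
    rw [Set.ncard_image_of_injective _ heinj]
    have : {j | j ≠ i} = (↑(Finset.univ.erase i) : Set (Fin r)) := by
      ext j; simp [Finset.mem_erase]
    rw [this, Set.ncard_coe_finset, Finset.card_erase_of_mem (Finset.mem_univ i),
      Finset.card_univ, Fintype.card_fin]
  have hdisjCi : ∀ i, Disjoint (Ci i) (e '' {j | j ≠ i}) := by
    intro i
    rw [Set.disjoint_right]
    rintro c ⟨j, _, rfl⟩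
    exact fun hc => heA j (hCiA i hc)
  have hTinf : ∀ i, (insert v (W i)).Infinite :=
    fun i => (hM.mono (Set.subset_union_left)).mono (Set.subset_insert _ _)
  have hCicard : ∀ i, (Ci i).ncard ≤ 5 - r := by
    intro i
    have hT := dich _ (hTinf i)
    have hcount : (colourSet Δ (insert v (W i))).ncard = (Ci i).ncard + (r - 1) := by
      rw [hcolT i, Set.ncard_union_eq (hdisjCi i) (hCifin i) (hefin _), hecard i]
    have hle : (Ci i).ncard ≤ 8 - r :=
      le_trans (Set.ncard_le_ncard (hCiA i) hA'fin) hA'r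
    omega
  have hαe : ({α, estar} : Set ℕ) ⊆ Ci ⟨0, by omega⟩ := by
    rintro c (rfl | rfl)
    · exact Or.inl (hαmem _ Set.subset_union_left)
    · exact Or.inr rfl
  have hCieq : ∀ i, Ci i = {α, estar} := by
    intro i
    have hsub' : ({α, estar} : Set ℕ) ⊆ Ci i := by
      rintro c (rfl | rfl)
      · exact Or.inl (hαmem _ Set.subset_union_left)
      · exact Or.inr rfl
    exact (Set.eq_of_subset_of_ncard_le hsub' (le_trans (hCicard i) hae) (hCifin i)).symm
  -- the full set T := insert v (M ∪ range u)
  have hcover : ∀ x ∈ M ∪ Set.range u, ∀ y ∈ M ∪ Set.range u, ∃ i, x ∈ W i ∧ y ∈ W i := by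
    intro x hx y hy
    have hpick : ∀ z : ℕ, z ∈ M ∪ Set.range u → ∃ jz : Fin r,
        ∀ i : Fin r, i ≠ jz → z ∈ W i := by
      rintro z (hz | ⟨j, rfl⟩)
      · exact ⟨⟨0, by omega⟩, fun i _ => Or.inl hz⟩
      · exact ⟨j, fun i hij => Or.inr ⟨j, Ne.symm hij, rfl⟩⟩
    obtain ⟨jx, hjx⟩ := hpick x hx
    obtain ⟨jy, hjy⟩ := hpick y hy
    have : ∃ i : Fin r, i ≠ jx ∧ i ≠ jy := by
      by_contra h
      push_neg at h
      have huniv : (Finset.univ : Finset (Fin r)) ⊆ {jx, jy} := by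
        intro i _
        rcases eq_or_ne i jx with h' | h'
        · simp [h']
        · simp [h i h']
      have hc2 := Finset.card_le_card huniv
      have hc3 : ({jx, jy} : Finset (Fin r)).card ≤ 2 :=
        (Finset.card_insert_le _ _).trans (by simp)
      rw [Finset.card_univ, Fintype.card_fin] at hc2
      omega
    obtain ⟨i, hix, hiy⟩ := this
    exact ⟨i, hjx i hix, hjy i hiy⟩
  have hBfull : colourSet Δ (M ∪ Set.range u) ⊆ ({α, estar} : Set ℕ) := by
    rintro c ⟨x, hx, y, hy, hxy, rfl⟩
    obtain ⟨i, hxi, hyi⟩ := hcover x hx y hy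
    have : edgeCol Δ x y ∈ Ci i := Or.inl (mem_colourSet Δ hxi hyi hxy)
    rwa [hCieq i] at this
  have hcolFull : colourSet Δ (insert v (M ∪ Set.range u))
      = ({α, estar} : Set ℕ) ∪ Set.range e := by
    rw [colourSet_insert Δ hvRange, Set.image_union, himgM, ← Set.range_comp,
      show edgeCol Δ v ∘ u = e from funext hvu]
    ext c
    constructor
    · rintro (hc | (rfl | hc))
      · have := hBfull hc
        exact Or.inl this
      · exact Or.inl (Or.inr rfl)
      · exact Or.inr hc
    · rintro ((rfl | rfl) | hc)
      · exact Or.inl (hαmem _ Set.subset_union_left)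
      · exact Or.inr (Or.inl rfl)
      · exact Or.inr (Or.inr hc)
  -- count: exactly 5
  have hrange : (Set.range e).ncard = r := by
    rw [← Set.image_univ, Set.ncard_image_of_injective _ heinj, Set.ncard_univ,
      Nat.card_eq_fintype_card, Fintype.card_fin]
  have hdisj : Disjoint ({α, estar} : Set ℕ) (Set.range e) := by
    rw [Set.disjoint_right]
    rintro c ⟨j, rfl⟩
    rintro (rfl | rfl)
    · exact heA j hαA
    · exact heA j hestar
  have hpairfin : ({α, estar} : Set ℕ).Finite :=
    (Set.finite_singleton estar).insert α
  have hpcard : ({α, estar} : Set ℕ).ncard = 5 - r := by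
    have h1 := hCicard ⟨0, by omega⟩
    have h2 : ({α, estar} : Set ℕ).ncard = (Ci ⟨0, by omega⟩).ncard := by
      rw [hCieq ⟨0, by omega⟩]
    omega
  have hppos : 0 < ({α, estar} : Set ℕ).ncard :=
    (Set.ncard_pos hpairfin).mpr ⟨α, Or.inl rfl⟩
  have hfinal : (colourSet Δ (insert v (M ∪ Set.range u))).ncard = 5 := by
    rw [hcolFull, Set.ncard_union_eq hdisj hpairfin (Set.finite_range e), hrange, hpcard]
    omega
  have hTinf' : (insert v (M ∪ Set.range u)).Infinite :=
    (hM.mono Set.subset_union_left).mono (Set.subset_insert _ _)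
  exact (dich _ hTinf').1 hfinal
lemma exists_inj_fun {s : Set ℕ} (hs : s.Finite) {n : ℕ} (h : n ≤ s.ncard) :
    ∃ f : Fin n → ℕ, Function.Injective f ∧ ∀ i, f i ∈ s := by
  obtain ⟨t, hts, hcard⟩ := Set.exists_subset_card_eq h
  have htfin : t.Finite := hs.subset hts
  have hcard' : htfin.toFinset.card = n := by
    rwa [Set.ncard_eq_toFinset_card t htfin] at hcard
  refine ⟨htfin.toFinset.orderEmbOfFin hcard', (htfin.toFinset.orderEmbOfFin hcard').injective,
    fun i => ?_⟩
  have := Finset.orderEmbOfFin_mem htfin.toFinset hcard' i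
  rw [Set.Finite.mem_toFinset] at this
  exact hts this

/-- For every `k ≥ 5` and every surjective colouring `Δ : ℕ^(2) ↠ [k]`,
`F_Δ ∩ {5, 6, 7} ≠ ∅`. -/
theorem FSet_meets_five_six_seven (k : ℕ) (hk : 5 ≤ k) (Δ : ℕ → ℕ → ℕ)
    (hΔ : IsColouring Δ k) :
    ∃ m ∈ FSet Δ k, m = 5 ∨ m = 6 ∨ m = 7 := by
  classical
  obtain ⟨h1, h2⟩ := hΔ
  by_cases hk7 : k ≤ 7
  · -- easy case: ℕ itself is exactly k-coloured
    have hunivcol : colourSet Δ Set.univ = ↑(Finset.Icc 1 k) := by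
      apply Set.Subset.antisymm (colourSet_subset_Icc h1 _)
      intro c hc
      obtain ⟨x, y, hxy, hcol⟩ := h2 c (by exact_mod_cast hc)
      exact ⟨x, trivial, y, trivial, hxy, hcol⟩
    refine ⟨k, ⟨Finset.mem_Icc.mpr ⟨by omega, le_refl k⟩, Set.univ, Set.infinite_univ, ?_⟩,
      by omega⟩
    rw [hunivcol, Set.ncard_coe_finset, Nat.card_Icc]
    omega
  · -- hard case : k ≥ 8
    by_contra hcon
    push_neg at hcon
    have dich : ∀ X : Set ℕ, X.Infinite →
        (colourSet Δ X).ncard ≠ 5 ∧ (colourSet Δ X).ncard ≠ 6 ∧ (colourSet Δ X).ncard ≠ 7 := by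
      intro X hX
      refine ⟨?_, ?_, ?_⟩ <;> intro hEq
      · exact (hcon 5 ⟨Finset.mem_Icc.mpr ⟨by omega, by omega⟩, X, hX, hEq⟩).1 rfl
      · exact (hcon 6 ⟨Finset.mem_Icc.mpr ⟨by omega, by omega⟩, X, hX, hEq⟩).2.1 rfl
      · exact (hcon 7 ⟨Finset.mem_Icc.mpr ⟨by omega, by omega⟩, X, hX, hEq⟩).2.2 rfl
    -- a monochromatic infinite set
    obtain ⟨M₀, α₀, -, hM₀inf, hM₀mono⟩ := exists_mono_subset Δ k h1 Set.infinite_univ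
    have hM₀col : colourSet Δ M₀ = {α₀} := by
      apply Set.Subset.antisymm
      · rintro c ⟨x, hx, y, hy, hxy, rfl⟩
        exact hM₀mono x hx y hy hxy
      · rintro c rfl
        obtain ⟨x, hx, y, hy, hxy⟩ := hM₀inf.nontrivial
        have := mem_colourSet Δ hx hy hxy
        rwa [hM₀mono x hx y hy hxy] at this
    -- witnesses for every colour
    have h2' : ∀ c : ℕ, ∃ x y : ℕ, c ∈ Finset.Icc 1 k → (x ≠ y ∧ edgeCol Δ x y = c) := by
      intro c
      by_cases hc : c ∈ Finset.Icc 1 k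
      · obtain ⟨x, y, hxy⟩ := h2 c hc
        exact ⟨x, y, fun _ => hxy⟩
      · exact ⟨0, 0, fun h => absurd h hc⟩
    choose xf yf hxyf using h2'
    set Wfin : Finset ℕ := (Finset.Icc 1 k).biUnion (fun c => {xf c, yf c}) with hWfin
    have hWcol : 8 ≤ (colourSet Δ (M₀ ∪ ↑Wfin)).ncard := by
      have hsub : ↑(Finset.Icc 1 k) ⊆ colourSet Δ (M₀ ∪ ↑Wfin) := by
        intro c hc
        have hc' : c ∈ Finset.Icc 1 k := by exact_mod_cast hc
        obtain ⟨hne, hcol⟩ := hxyf c hc'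
        refine ⟨xf c, Or.inr ?_, yf c, Or.inr ?_, hne, hcol⟩
        · exact_mod_cast Finset.mem_biUnion.mpr ⟨c, hc', by simp⟩
        · exact_mod_cast Finset.mem_biUnion.mpr ⟨c, hc', by simp⟩
      have h8k : 8 ≤ k := by omega
      calc (8 : ℕ) ≤ k := h8k
        _ = (↑(Finset.Icc 1 k) : Set ℕ).ncard := by
            rw [Set.ncard_coe_finset, Nat.card_Icc]
            omega
        _ ≤ _ := Set.ncard_le_ncard hsub (colourSet_finite h1 _)
    -- minimal witness-set size pushing the count to ≥ 8
    set Q : ℕ → Prop := fun n =>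
      ∃ F : Finset ℕ, F.card = n ∧ 8 ≤ (colourSet Δ (M₀ ∪ ↑F)).ncard with hQdef
    have hQex : ∃ n, Q n := ⟨Wfin.card, Wfin, rfl, hWcol⟩
    obtain ⟨F, hFcard, hF8⟩ : Q (Nat.find hQex) := Nat.find_spec hQex
    have hmin : ∀ m, m < Nat.find hQex → ¬ Q m := fun m hm => Nat.find_min hQex hm
    have hFne : F.Nonempty := by
      rcases Finset.eq_empty_or_nonempty F with rfl | h
      · exfalso
        rw [show M₀ ∪ ↑(∅ : Finset ℕ) = M₀ by simp, hM₀col, Set.ncard_singleton] at hF8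
        omega
      · exact h
    have hFpos : 0 < F.card := Finset.card_pos.mpr hFne
    have hFM₀ : ∀ w ∈ F, w ∉ M₀ := by
      intro w hw hwM
      apply hmin (Nat.find hQex - 1) (by omega)
      refine ⟨F.erase w, by rw [Finset.card_erase_of_mem hw, hFcard], ?_⟩
      have heq : M₀ ∪ ↑(F.erase w) = M₀ ∪ ↑F := by
        ext x
        simp only [Set.mem_union, Finset.coe_erase, Set.mem_diff, Finset.mem_coe,
          Set.mem_singleton_iff]
        constructor
        · rintro (h | h)
          · exact Or.inl h
          · exact Or.inr h.1
        · rintro (h | h)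
          · exact Or.inl h
          · by_cases hxw : x = w
            · exact Or.inl (hxw ▸ hwM)
            · exact Or.inr ⟨h, hxw⟩
      rw [heq]
      exact hF8
    obtain ⟨v, hv⟩ := hFne
    set G : Set ℕ := M₀ ∪ ↑(F.erase v) with hGdef
    have hGinf : G.Infinite := hM₀inf.mono Set.subset_union_left
    have hvG : v ∉ G := by
      rintro (h | h)
      · exact hFM₀ v hv h
      · exact (Finset.notMem_erase v F) (by exact_mod_cast h)
    have hinsert : insert v G = M₀ ∪ ↑F := by
      rw [hGdef]
      ext x
      simp only [Set.mem_insert_iff, Set.mem_union, Finset.coe_erase, Set.mem_diff,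
        Finset.mem_coe, Set.mem_singleton_iff]
      constructor
      · rintro (rfl | h | h)
        · exact Or.inr hv
        · exact Or.inl h
        · exact Or.inr h.1
      · rintro (h | h)
        · exact Or.inr (Or.inl h)
        · by_cases hxv : x = v
          · exact Or.inl hxv
          · exact Or.inr (Or.inr ⟨h, hxv⟩)
    have hG8 : 8 ≤ (colourSet Δ (insert v G)).ncard := by rw [hinsert]; exact hF8
    have hGcard : (colourSet Δ G).ncard ≤ 4 := by
      have hlt : (colourSet Δ G).ncard < 8 := by
        by_contra h
        push_neg at h
        exact hmin (Nat.find hQex - 1) (by omega)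
          ⟨F.erase v, by rw [Finset.card_erase_of_mem hv, hFcard], h⟩
      have := dich G hGinf
      omega
    -- set up for the core lemma
    set A : Set ℕ := colourSet Δ G with hAdef
    have hAfin : A.Finite := colourSet_finite h1 G
    set E : Set ℕ := edgeCol Δ v '' G with hEdef
    have hcolvG : colourSet Δ (insert v G) = A ∪ E := colourSet_insert Δ hvG
    have hEIcc : E ⊆ ↑(Finset.Icc 1 k) := by
      rintro c ⟨x, hx, rfl⟩
      exact_mod_cast h1 v x (fun h => hvG (h ▸ hx))
    have hEfin : E.Finite := Set.Finite.subset (Finset.Icc 1 k).finite_toSet hEIcc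
    have hEA4 : 4 ≤ (E \ A).ncard := by
      have hun : A ∪ E = A ∪ (E \ A) := by rw [Set.union_diff_self]
      have hle := Set.ncard_union_le A (E \ A)
      rw [hcolvG, hun] at hG8
      omega
    obtain ⟨estar, hstarinf⟩ := exists_infinite_fiber' hGinf (edgeCol Δ v)
      (fun x hx => h1 v x (fun h => hvG (h ▸ hx)))
    obtain ⟨M, α, hMsub, hMinf, hMmono⟩ := exists_mono_subset Δ k h1 hstarinf
    have hMG : M ⊆ G := fun x hx => (hMsub hx).1
    have hvM : v ∉ M := fun h => hvG (hMG h)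
    have hvMc : ∀ x ∈ M, edgeCol Δ v x = estar := fun x hx => (hMsub hx).2
    have hαA : α ∈ A := by
      obtain ⟨x, hx, y, hy, hxy⟩ := hMinf.nontrivial
      have := mem_colourSet Δ (hMG hx) (hMG hy) hxy
      rwa [hMmono x hx y hy hxy] at this
    have hEAfin : (E \ A).Finite := hEfin.diff (t := A)
    by_cases hstarA : estar ∈ A
    · -- r = 4
      obtain ⟨e, heinj, heMem⟩ := exists_inj_fun hEAfin hEA4 (n := 4)
      have heE : ∀ i : Fin 4, e i ∈ E := fun i => (heMem i).1
      have heA : ∀ i : Fin 4, e i ∉ A := fun i => (heMem i).2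
      choose uu huuG huue using heE
      have huuv : ∀ i, uu i ≠ v := fun i h => hvG (h ▸ huuG i)
      have huuM : ∀ i, uu i ∉ M := by
        intro i h
        exact heA i ((hvMc (uu i) h ▸ huue i) ▸ hstarA)
      have hsubG : M ∪ Set.range uu ⊆ G := by
        rintro x (hx | ⟨i, rfl⟩)
        · exact hMG hx
        · exact huuG i
      exact core_lemma Δ dich 4 (by omega) M hMinf v α estar hvM uu e huuM huuv
        hMmono hvMc huue A hAfin hstarA hαA (colourSet_mono Δ hsubG) heA heinj
        (by omega)
        (by
          have : 0 < ({α, estar} : Set ℕ).ncard :=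
            (Set.ncard_pos ((Set.finite_singleton estar).insert α)).mpr ⟨α, Or.inl rfl⟩
          omega)
    · -- r = 3
      have hestarE : estar ∈ E := by
        obtain ⟨x, hx⟩ := hstarinf.nonempty
        exact ⟨x, hx.1, hx.2⟩
      have h3 : 3 ≤ ((E \ A) \ {estar}).ncard := by
        have hsub3 : (E \ A) ⊆ ((E \ A) \ {estar}) ∪ {estar} := by
          intro x hx
          by_cases hxe : x = estar
          · exact Or.inr hxe
          · exact Or.inl ⟨hx, hxe⟩
        have hle := Set.ncard_union_le ((E \ A) \ {estar}) ({estar} : Set ℕ)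
        have hmono' := Set.ncard_le_ncard hsub3
          ((hEAfin.diff (t := {estar})).union (Set.finite_singleton estar))
        rw [Set.ncard_singleton] at hle
        omega
      obtain ⟨e, heinj, heMem⟩ := exists_inj_fun (hEAfin.diff (t := {estar})) h3 (n := 3)
      have heE : ∀ i : Fin 3, e i ∈ E := fun i => (heMem i).1.1
      have heA : ∀ i : Fin 3, e i ∉ A := fun i => (heMem i).1.2
      have heStar : ∀ i : Fin 3, e i ≠ estar := fun i => (heMem i).2
      choose uu huuG huue using heE
      have huuv : ∀ i, uu i ≠ v := fun i h => hvG (h ▸ huuG i)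
      have huuM : ∀ i, uu i ∉ M := by
        intro i h
        have h1' := huue i
        rw [hvMc (uu i) h] at h1'
        exact heStar i h1'.symm
      have hsubG : M ∪ Set.range uu ⊆ G := by
        rintro x (hx | ⟨i, rfl⟩)
        · exact hMG hx
        · exact huuG i
      have hA'fin : (A ∪ {estar} : Set ℕ).Finite := hAfin.union (Set.finite_singleton _)
      have hA'card : (A ∪ {estar} : Set ℕ).ncard ≤ 5 := by
        have hle := Set.ncard_union_le A ({estar} : Set ℕ)
        rw [Set.ncard_singleton] at hle
        omega
      have heA' : ∀ i : Fin 3, e i ∉ (A ∪ {estar} : Set ℕ) := by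
        rintro i (h | h)
        · exact heA i h
        · exact heStar i h
      have hαe : α ≠ estar := fun h => hstarA (h ▸ hαA)
      exact core_lemma Δ dich 3 (by omega) M hMinf v α estar hvM uu e huuM huuv
        hMmono hvMc huue (A ∪ {estar}) hA'fin (Or.inr rfl) (Or.inl hαA)
        ((colourSet_mono Δ hsubG).trans Set.subset_union_left) heA' heinj
        (by omega)
        (by rw [Set.ncard_pair hαe])
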